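/- Let G = (V, E) be a finite, undirected, connected simple graph with positive edge weights w, fix a linear order < on V, let P be a set of unordered pairs of vertices, and let f be a distortion function. Let Ē be the set of directed edges obtained by replacing each e = {i, j} ∈ E by (i, j) and (j, i), each of weight w(e). Call an assignment of values x_e ∈ {0,1} for e ∈ E and x^{uv}_{(i,j)} ∈ {0,1} for (i, j) ∈ Ē and pairs (u, v) ∈ P with u < v feasible if for every (u, v) ∈ P with u < v: (1) Σ_{(i,j) ∈ Ē} x^{uv}_{(i,j)}·w({i,j}) ≤ f(d_G(u, v)); (2) for every vertex i, the net outflow Σ_{(i,j) ∈ Ē} x^{uv}_{(i,j)} − Σ_{(j,i) ∈ Ē} x^{uv}_{(j,i)} equals 1 if i = u, −1 if i = v, and 0 otherwise; (3) for every vertex i, Σ_{(i,j) ∈ Ē} x^{uv}_{(i,j)} ≤ 1; and (4) for every edge e = {i, j} ∈ E, x^{uv}_{(i,j)} + x^{uv}_{(j,i)} ≤ x_e. Then the minimum of Σ_{e ∈ E} w(e)·x_e over all feasible assignments equals the minimum of W(E') over all edge sets E' ⊆ E satisfying d_{E'}(u, v) ≤ f(d_G(u, v)) for all (u, v) ∈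 P. -/

import Mathlib

open SimpleGraph Finset

variable {V : Type*}

/-- Total weight of a walk: sum of its edge weights. -/
def walkWeight (w : Sym2 V → ℝ) {G : SimpleGraph V} {u v : V} (p : G.Walk u v) : ℝ :=
  (p.edges.map w).sum

/-- Total weight of a finite edge set. -/
def setWeight (w : Sym2 V → ℝ) (E' : Finset (Sym2 V)) : ℝ :=
  ∑ e ∈ E', w e

/-- Shortest-walk distance in `G` between `u` and `v`. -/
noncomputable def graphDist (G : SimpleGraph V) (w : Sym2 V → ℝ) (u v : V) : ℝ :=
  sInf {c : ℝ | ∃ p : G.Walk u v, walkWeight w p = c}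

/-- A distortion function: `f(x) ≥ x` for all `x ≥ 0`. -/
def IsDistortion (f : ℝ → ℝ) : Prop := ∀ x : ℝ, 0 ≤ x → x ≤ f x

section Aux
variable [Fintype V] [DecidableEq V]


lemma sum_boole_card {α : Type*} [DecidableEq α] (s : Finset α) (t : α → ℝ)
    (h : ∀ a ∈ s, t a = 0 ∨ t a = 1) :
    ∑ a ∈ s, t a = ((s.filter fun a => t a = 1).card : ℝ) := by
  rw [← Finset.sum_filter_add_sum_filter_not s (fun a => t a = 1)]
  have h1 : ∑ a ∈ s.filter (fun a => t a = 1), t a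
      = ((s.filter fun a => t a = 1).card : ℝ) := by
    rw [Finset.sum_congr rfl (fun a ha => (Finset.mem_filter.mp ha).2)]
    simp
  have h2 : ∑ a ∈ s.filter (fun a => ¬ t a = 1), t a = 0 := by
    apply Finset.sum_eq_zero
    intro a ha
    rcases h a (Finset.mem_filter.mp ha).1 with h0 | h0
    · exact h0
    · exact absurd h0 (Finset.mem_filter.mp ha).2
  rw [h1, h2, add_zero]

lemma toFinset_sum_le {α : Type*} [DecidableEq α] (l : List α) (w : α → ℝ)
    (h : ∀ a ∈ l, 0 ≤ w a) :
    ∑ a ∈ l.toFinset, w a ≤ (l.map w).sum := by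
  induction l with
  | nil => simp
  | cons a l ih =>
    simp only [List.toFinset_cons, List.map_cons, List.sum_cons]
    by_cases ha : a ∈ l.toFinset
    · rw [Finset.insert_eq_self.mpr ha]
      have := ih (fun b hb => h b (List.mem_cons_of_mem a hb))
      have hwa := h a List.mem_cons_self
      linarith
    · rw [Finset.sum_insert ha]
      have := ih (fun b hb => h b (List.mem_cons_of_mem a hb))
      linarith




lemma flowWalk (G : SimpleGraph V) [DecidableRel G.Adj] :
    ∀ (F : Finset (V × V)), ∀ (u v : V), u ≠ v →
    (∀ p ∈ F, G.Adj p.1 p.2) →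
    (∀ i : V, (univ.filter fun j => (i,j) ∈ F).card ≤ 1) →
    (∀ i : V, ((univ.filter fun j => (i,j) ∈ F).card : ℤ)
        - ((univ.filter fun j => (j,i) ∈ F).card : ℤ)
        = if i = u then 1 else if i = v then -1 else 0) →
    ∃ p : G.Walk u v, (p.darts.map SimpleGraph.Dart.toProd).Nodup ∧
      ∀ d ∈ p.darts, d.toProd ∈ F := by
  intro F
  induction F using Finset.strongInduction with
  | _ F IH =>
    intro u v huv hadj hout hcons
    -- out-degree at u is 1, in-degree is 0
    have hu : ((univ.filter fun j => (u,j) ∈ F).card : ℤ)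
        - ((univ.filter fun j => (j,u) ∈ F).card : ℤ) = 1 := by simpa using hcons u
    have houtu : (univ.filter fun j => (u,j) ∈ F).card = 1 := by
      have h1 := hout u
      omega
    have hinu : (univ.filter fun j => (j,u) ∈ F).card = 0 := by
      have h1 := hout u
      omega
    obtain ⟨j, hj⟩ := Finset.card_eq_one.mp houtu
    have hjF : (u, j) ∈ F := by
      have : j ∈ ({j} : Finset V) := Finset.mem_singleton_self j
      rw [← hj] at this
      simpa using this
    have hadjuj : G.Adj u j := hadj _ hjF
    by_cases hjv : j = v
    · subst hjv
      refine ⟨SimpleGraph.Walk.cons hadjuj SimpleGraph.Walk.nil, by simp, ?_⟩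
      intro d hd
      simp only [SimpleGraph.Walk.darts_cons, SimpleGraph.Walk.darts_nil,
        List.mem_cons, List.not_mem_nil, or_false] at hd
      subst hd
      exact hjF
    · -- recurse on F.erase (u,j)
      set F' := F.erase (u, j) with hF'
      have hss : F' ⊂ F := Finset.erase_ssubset hjF
      have hmem' : ∀ p : V × V, p ∈ F' ↔ p ∈ F ∧ p ≠ (u, j) := by
        intro p; rw [hF', Finset.mem_erase]; tauto
      have huj : u ≠ j := hadjuj.ne
      -- degree bookkeeping
      have houtF' : ∀ i : V, i ≠ u →
          (univ.filter fun k => (i,k) ∈ F').card = (univ.filter fun k => (i,k) ∈ F).card := by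
        intro i hi
        congr 1
        apply Finset.filter_congr
        intro k _
        rw [hmem']
        simp [Prod.ext_iff, hi]
      have houtF'u : (univ.filter fun k => (u,k) ∈ F').card = 0 := by
        rw [Finset.card_eq_zero, Finset.filter_eq_empty_iff]
        intro k _
        rw [hmem']
        rintro ⟨hk, hne⟩
        have : k ∈ ({j} : Finset V) := by rw [← hj]; simp [hk]
        simp only [Finset.mem_singleton] at this
        exact hne (by rw [this])
      have hinF' : ∀ i : V, i ≠ j →
          (univ.filter fun k => (k,i) ∈ F').card = (univ.filter fun k => (k,i) ∈ F).card := by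
        intro i hi
        congr 1
        apply Finset.filter_congr
        intro k _
        rw [hmem']
        simp [Prod.ext_iff, hi]
      have hinF'j : (univ.filter fun k => (k,j) ∈ F').card
          = (univ.filter fun k => (k,j) ∈ F).card - 1 := by
        have : (univ.filter fun k => (k,j) ∈ F') = (univ.filter fun k => (k,j) ∈ F).erase u := by
          ext k
          simp only [Finset.mem_filter, Finset.mem_erase, Finset.mem_univ, true_and, hmem']
          constructor
          · rintro ⟨hk, hne⟩
            exact ⟨fun h => hne (by rw [h]), hk⟩
          · rintro ⟨hne, hk⟩
            exact ⟨hk, fun h => hne (congrArg Prod.fst h)⟩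
        rw [this, Finset.card_erase_of_mem]
        simp [hjF]
      have hinFj_pos : 1 ≤ (univ.filter fun k => (k,j) ∈ F).card := by
        apply Finset.card_pos.mpr
        exact ⟨u, by simp [hjF]⟩
      have hout' : ∀ i : V, (univ.filter fun k => (i,k) ∈ F').card ≤ 1 := by
        intro i
        by_cases hi : i = u
        · subst hi; omega
        · rw [houtF' i hi]; exact hout i
      have hcons' : ∀ i : V, ((univ.filter fun k => (i,k) ∈ F').card : ℤ)
          - ((univ.filter fun k => (k,i) ∈ F').card : ℤ)
          = if i = j then 1 else if i = v then -1 else 0 := by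
        intro i
        by_cases hi : i = u
        · rw [hi, houtF'u, hinF' u huj]
          rw [if_neg huj, if_neg huv]
          omega
        · by_cases hij : i = j
          · rw [hij, houtF' j (Ne.symm huj), hinF'j, if_pos rfl]
            have hcj := hcons j
            rw [if_neg (Ne.symm huj), if_neg hjv] at hcj
            push_cast [Nat.cast_sub hinFj_pos]
            omega
          · rw [houtF' i hi, hinF' i hij, hcons i]
            simp [hi, hij]
      obtain ⟨q, hq1, hq2⟩ := IH F' hss j v hjv
        (fun p hp => hadj p ((hmem' p).mp hp).1) hout' hcons'
      refine ⟨SimpleGraph.Walk.cons hadjuj q, ?_, ?_⟩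
      · simp only [SimpleGraph.Walk.darts_cons, List.map_cons, List.nodup_cons]
        refine ⟨?_, hq1⟩
        intro hmem
        simp only [List.mem_map] at hmem
        obtain ⟨d, hd, hdeq⟩ := hmem
        have := hq2 d hd
        rw [hdeq] at this
        exact ((hmem' _).mp this).2 rfl
      · intro d hd
        simp only [SimpleGraph.Walk.darts_cons, List.mem_cons] at hd
        rcases hd with hd | hd
        · subst hd; exact hjF
        · exact ((hmem' _).mp (hq2 d hd)).1



lemma card_out (L : List (V × V)) (hL : (L.map Prod.fst).Nodup) (i : V) :
    (univ.filter fun j => (i,j) ∈ L).card = if i ∈ L.map Prod.fst then 1 else 0 := by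
  by_cases hi : i ∈ L.map Prod.fst
  · rw [if_pos hi]
    obtain ⟨p, hpL, hp1⟩ := List.mem_map.mp hi
    rw [Finset.card_eq_one]
    refine ⟨p.2, ?_⟩
    ext j
    simp only [Finset.mem_filter, Finset.mem_univ, true_and, Finset.mem_singleton]
    constructor
    · intro hj
      have := List.inj_on_of_nodup_map hL hj hpL (by simp [hp1])
      rw [← this]
    · rintro rfl
      rwa [show (i, p.2) = p by rw [← hp1]]
  · rw [if_neg hi, Finset.card_eq_zero, Finset.filter_eq_empty_iff]
    intro j _
    intro hj
    exact hi (List.mem_map.mpr ⟨(i,j), hj, rfl⟩)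

lemma card_in (L : List (V × V)) (hL : (L.map Prod.snd).Nodup) (i : V) :
    (univ.filter fun j => (j,i) ∈ L).card = if i ∈ L.map Prod.snd then 1 else 0 := by
  have h1 : ((L.map Prod.swap).map Prod.fst).Nodup := by
    rw [List.map_map]
    exact hL
  have h2 := card_out (L.map Prod.swap) h1 i
  have h3 : (univ.filter fun j => (j,i) ∈ L) = (univ.filter fun j => (i,j) ∈ L.map Prod.swap) := by
    ext j
    simp only [Finset.mem_filter, Finset.mem_univ, true_and, List.mem_map]
    constructor
    · intro hj; exact ⟨(j,i), hj, rfl⟩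
    · rintro ⟨p, hp, hpe⟩
      have : p = (j, i) := by
        have := congrArg Prod.swap hpe
        simpa [Prod.swap_swap] using this
      rwa [← this]
  rw [h3, h2, List.map_map]
  rfl

/-- dart list facts for a path -/
lemma path_facts {G : SimpleGraph V} [DecidableRel G.Adj] {u v : V} (q : G.Walk u v)
    (hq : q.IsPath) (huv : u ≠ v) :
    (q.darts.map SimpleGraph.Dart.toProd).Nodup ∧
    (∀ i : V, (univ.filter fun j => (i,j) ∈ q.darts.map SimpleGraph.Dart.toProd).card
        = if i ∈ q.support ∧ i ≠ v then 1 else 0) ∧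
    (∀ i : V, (univ.filter fun j => (j,i) ∈ q.darts.map SimpleGraph.Dart.toProd).card
        = if i ∈ q.support ∧ i ≠ u then 1 else 0) := by
  have hsup : q.support.Nodup := hq.support_nodup
  have hfst : (q.darts.map SimpleGraph.Dart.toProd).map Prod.fst = q.support.dropLast := by
    rw [List.map_map]
    exact q.map_fst_darts
  have hsnd : (q.darts.map SimpleGraph.Dart.toProd).map Prod.snd = q.support.tail := by
    rw [List.map_map]
    exact q.map_snd_darts
  have hne : q.support ≠ [] := q.support_ne_nil
  have hsplit : q.support.dropLast ++ [v] = q.support := by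
    conv_rhs => rw [← List.dropLast_append_getLast hne]
    rw [q.getLast_support]
  have hcons : q.support = u :: q.support.tail := q.support_eq_cons
  -- membership characterizations
  have hmemd : ∀ i : V, i ∈ q.support.dropLast ↔ i ∈ q.support ∧ i ≠ v := by
    intro i
    constructor
    · intro hi
      refine ⟨by rw [← hsplit]; exact List.mem_append_left _ hi, ?_⟩
      intro hiv
      subst hiv
      have := hsplit ▸ hsup
      rw [List.nodup_append] at this
      exact this.2.2 i hi i (List.mem_singleton.mpr rfl) rfl
    · rintro ⟨hi, hiv⟩
      rw [← hsplit] at hi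
      rcases List.mem_append.mp hi with h | h
      · exact h
      · exact absurd (List.mem_singleton.mp h) hiv
  have hmemt : ∀ i : V, i ∈ q.support.tail ↔ i ∈ q.support ∧ i ≠ u := by
    intro i
    constructor
    · intro hi
      refine ⟨by rw [hcons]; exact List.mem_cons_of_mem _ hi, ?_⟩
      intro hiu
      subst hiu
      have := hcons ▸ hsup
      rw [List.nodup_cons] at this
      exact this.1 hi
    · rintro ⟨hi, hiu⟩
      rw [hcons] at hi
      rcases List.mem_cons.mp hi with h | h
      · exact absurd h hiu
      · exact h
  have hfstnd : ((q.darts.map SimpleGraph.Dart.toProd).map Prod.fst).Nodup := by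
    rw [hfst]; exact hsup.sublist (List.dropLast_sublist _)
  have hsndnd : ((q.darts.map SimpleGraph.Dart.toProd).map Prod.snd).Nodup := by
    rw [hsnd]; exact hsup.sublist (List.tail_sublist _)
  refine ⟨List.Nodup.of_map _ hfstnd, ?_, ?_⟩
  · intro i
    rw [card_out _ hfstnd i, hfst]
    by_cases h : i ∈ q.support.dropLast
    · rw [if_pos h, if_pos ((hmemd i).mp h)]
    · rw [if_neg h, if_neg (fun hh => h ((hmemd i).mpr hh))]
  · intro i
    rw [card_in _ hsndnd i, hsnd]
    by_cases h : i ∈ q.support.tail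
    · rw [if_pos h, if_pos ((hmemt i).mp h)]
    · rw [if_neg h, if_neg (fun hh => h ((hmemt i).mpr hh))]

lemma toFinset_sum_le' {α : Type*} [DecidableEq α] (l : List α) (w : α → ℝ)
    (h : ∀ a ∈ l, 0 ≤ w a) :
    ∑ a ∈ l.toFinset, w a ≤ (l.map w).sum := by
  induction l with
  | nil => simp
  | cons a l ih =>
    simp only [List.toFinset_cons, List.map_cons, List.sum_cons]
    by_cases ha : a ∈ l.toFinset
    · rw [Finset.insert_eq_self.mpr ha]
      have := ih (fun b hb => h b (List.mem_cons_of_mem a hb))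
      have hwa := h a List.mem_cons_self
      linarith
    · rw [Finset.sum_insert ha]
      have := ih (fun b hb => h b (List.mem_cons_of_mem a hb))
      linarith


/-- A walk can be replaced by a path with edges among the walk's edges and no larger weight. -/
lemma exists_path_of_walk {G : SimpleGraph V} [DecidableEq V] {u v : V}
    (w : Sym2 V → ℝ) (hw : ∀ e ∈ G.edgeSet, 0 < w e) (p : G.Walk u v) :
    ∃ q : G.Walk u v, q.IsPath ∧ (∀ e ∈ q.edges, e ∈ p.edges) ∧
      walkWeight w q ≤ walkWeight w p := by
  refine ⟨p.bypass, p.bypass_isPath, fun e he => p.edges_bypass_subset he, ?_⟩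
  have hnn : ∀ e ∈ p.edges, 0 ≤ w e := fun e he => (hw e (p.edges_subset_edgeSet he)).le
  have h1 : walkWeight w p.bypass = ∑ e ∈ p.bypass.edges.toFinset, w e :=
    (List.sum_toFinset w p.bypass_isPath.isTrail.edges_nodup).symm
  have h2 : ∑ e ∈ p.bypass.edges.toFinset, w e ≤ ∑ e ∈ p.edges.toFinset, w e := by
    apply Finset.sum_le_sum_of_subset_of_nonneg
    · intro e he
      rw [List.mem_toFinset] at he ⊢
      exact p.edges_bypass_subset he
    · intro e he _
      exact hnn e (List.mem_toFinset.mp he)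
  have h3 : ∑ e ∈ p.edges.toFinset, w e ≤ (p.edges.map w).sum := toFinset_sum_le' _ _ hnn
  calc walkWeight w p.bypass = _ := h1
    _ ≤ _ := h2
    _ ≤ _ := h3


lemma dirB [LinearOrder V]
    (G : SimpleGraph V) [DecidableRel G.Adj] (w : Sym2 V → ℝ)
    (hw : ∀ e ∈ G.edgeSet, 0 < w e) (P : Finset (Sym2 V)) (f : ℝ → ℝ)
    (E' : Finset (Sym2 V)) (hE' : ↑E' ⊆ G.edgeSet)
    (hwalks : ∀ u v : V, u < v → s(u, v) ∈ P →
        ∃ p : G.Walk u v, (∀ e ∈ p.edges, e ∈ E') ∧ walkWeight w p ≤ f (graphDist G w u v)) :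
    ∃ (x : Sym2 V → ℝ) (y : V → V → V → V → ℝ),
      (∀ e ∈ G.edgeFinset, x e = 0 ∨ x e = 1) ∧
      (∀ u v i j : V, y u v i j = 0 ∨ y u v i j = 1) ∧
      (∀ u v : V, u < v → s(u, v) ∈ P →
        ((∑ p ∈ Finset.univ.filter (fun p : V × V => G.Adj p.1 p.2),
            y u v p.1 p.2 * w s(p.1, p.2)) ≤ f (graphDist G w u v)) ∧
        (∀ i : V,
          (∑ j ∈ Finset.univ.filter (fun j => G.Adj i j), y u v i j) -
          (∑ j ∈ Finset.univ.filter (fun j => G.Adj j i), y u v j i) =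
            if i = u then 1 else if i = v then -1 else 0) ∧
        (∀ i : V, (∑ j ∈ Finset.univ.filter (fun j => G.Adj i j), y u v i j) ≤ 1) ∧
        (∀ i j : V, G.Adj i j → y u v i j + y u v j i ≤ x s(i, j))) ∧
      (∑ e ∈ G.edgeFinset, w e * x e) = ∑ e ∈ E', w e := by
  classical
  have key : ∀ u v : V, u < v → s(u,v) ∈ P → ∃ q : G.Walk u v, q.IsPath ∧
      (∀ e ∈ q.edges, e ∈ E') ∧ walkWeight w q ≤ f (graphDist G w u v) := by
    intro u v h1 h2
    obtain ⟨p, hpe, hpw⟩ := hwalks u v h1 h2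
    obtain ⟨q, hq1, hq2, hq3⟩ := exists_path_of_walk w hw p
    exact ⟨q, hq1, fun e he => hpe e (hq2 e he), le_trans hq3 hpw⟩
  choose Q hQpath hQmem hQw using key
  have hE'fin : E' ⊆ G.edgeFinset := by
    intro e he
    rw [SimpleGraph.mem_edgeFinset]
    exact hE' he
  refine ⟨fun e => if e ∈ E' then (1:ℝ) else 0,
    fun u v i j => if h : u < v ∧ s(u,v) ∈ P then
      (if (i,j) ∈ ((Q u v h.1 h.2).darts.map SimpleGraph.Dart.toProd) then (1:ℝ) else 0)
    else 0, ?_, ?_, ?_, ?_⟩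
  · intro e _
    dsimp only
    split_ifs <;> simp
  · intro u v i j
    dsimp only
    split_ifs <;> simp
  · intro u v h1 h2
    have hP : u < v ∧ s(u,v) ∈ P := ⟨h1, h2⟩
    set q : G.Walk u v := Q u v h1 h2 with hqdef
    set L : List (V × V) := q.darts.map SimpleGraph.Dart.toProd with hLdef
    have hyy : ∀ i j : V, (if h : u < v ∧ s(u,v) ∈ P then
        (if (i,j) ∈ ((Q u v h.1 h.2).darts.map SimpleGraph.Dart.toProd) then (1:ℝ) else 0)
        else 0) = if (i,j) ∈ L then (1:ℝ) else 0 := by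
      intro i j
      rw [dif_pos hP]
    obtain ⟨hnodup, hout, hin⟩ := path_facts q (hQpath u v h1 h2) (ne_of_lt h1)
    have hLadj : ∀ p : V × V, p ∈ L → G.Adj p.1 p.2 := by
      intro p hp
      obtain ⟨d, _, rfl⟩ := List.mem_map.mp hp
      exact d.adj
    have hLedge : ∀ p : V × V, p ∈ L → s(p.1, p.2) ∈ E' := by
      intro p hp
      obtain ⟨d, hd, rfl⟩ := List.mem_map.mp hp
      apply hQmem u v h1 h2
      have : d.edge ∈ q.edges := List.mem_map_of_mem (f := SimpleGraph.Dart.edge) hd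
      simpa [SimpleGraph.Dart.edge] using this
    have hedges : q.edges = L.map (Function.uncurry Sym2.mk : V × V → Sym2 V) := by
      rw [hLdef, List.map_map]
      rfl
    -- out-sums
    have hos : ∀ i : V, (∑ j ∈ univ.filter (fun j => G.Adj i j),
        (if (i,j) ∈ L then (1:ℝ) else 0))
        = ((univ.filter fun j => (i,j) ∈ L).card : ℝ) := by
      intro i
      rw [Finset.sum_boole]
      congr 2
      rw [Finset.filter_filter]
      apply Finset.filter_congr
      intro j _
      simp only [and_iff_right_iff_imp]
      intro hj
      exact hLadj _ hj
    have his : ∀ i : V, (∑ j ∈ univ.filter (fun j => G.Adj j i),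
        (if (j,i) ∈ L then (1:ℝ) else 0))
        = ((univ.filter fun j => (j,i) ∈ L).card : ℝ) := by
      intro i
      rw [Finset.sum_boole]
      congr 2
      rw [Finset.filter_filter]
      apply Finset.filter_congr
      intro j _
      simp only [and_iff_right_iff_imp]
      intro hj
      exact hLadj _ hj
    refine ⟨?_, ?_, ?_, ?_⟩
    · -- length constraint
      have hsum : (∑ p ∈ Finset.univ.filter (fun p : V × V => G.Adj p.1 p.2),
          (if (p.1,p.2) ∈ L then (1:ℝ) else 0) * w s(p.1, p.2)) = walkWeight w q := by
        have e1 : ∀ p ∈ Finset.univ.filter (fun p : V × V => G.Adj p.1 p.2),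
            (if (p.1,p.2) ∈ L then (1:ℝ) else 0) * w s(p.1, p.2)
            = if p ∈ L then w s(p.1, p.2) else 0 := by
          intro p _
          rw [show ((p.1 : V), (p.2 : V)) = p from rfl]
          split_ifs <;> ring
        rw [Finset.sum_congr rfl e1, ← Finset.sum_filter]
        have e2 : (Finset.univ.filter (fun p : V × V => G.Adj p.1 p.2)).filter (· ∈ L)
            = L.toFinset := by
          ext p
          simp only [Finset.mem_filter, Finset.mem_univ, true_and, List.mem_toFinset]
          exact ⟨fun h => h.2, fun h => ⟨hLadj p h, h⟩⟩
        rw [e2, List.sum_toFinset _ hnodup, walkWeight, hedges, hLdef]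
        simp only [List.map_map]
        rfl
      calc (∑ p ∈ Finset.univ.filter (fun p : V × V => G.Adj p.1 p.2),
            (if h : u < v ∧ s(u,v) ∈ P then
              (if (p.1,p.2) ∈ ((Q u v h.1 h.2).darts.map SimpleGraph.Dart.toProd) then (1:ℝ) else 0)
            else 0) * w s(p.1, p.2))
          = walkWeight w q := by
            rw [← hsum]
            apply Finset.sum_congr rfl
            intro p _
            rw [hyy p.1 p.2]
        _ ≤ f (graphDist G w u v) := hQw u v h1 h2
    · -- flow conservation
      intro i
      simp only [hyy]
      rw [hos i, his i, hout i, hin i]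
      have husup : u ∈ q.support := q.start_mem_support
      have hvsup : v ∈ q.support := q.end_mem_support
      have huv : u ≠ v := ne_of_lt h1
      by_cases hiu : i = u
      · subst hiu
        rw [if_pos ⟨husup, huv⟩, if_neg (fun h => h.2 rfl), if_pos rfl]
        norm_num
      · by_cases hiv : i = v
        · subst hiv
          rw [if_neg (fun h => h.2 rfl), if_pos ⟨hvsup, Ne.symm huv⟩, if_neg hiu, if_pos rfl]
          norm_num
        · rw [if_neg hiu, if_neg hiv]
          by_cases hisup : i ∈ q.support
          · rw [if_pos ⟨hisup, hiv⟩, if_pos ⟨hisup, hiu⟩]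
            norm_num
          · rw [if_neg (fun h => hisup h.1), if_neg (fun h => hisup h.1)]
            norm_num
    · -- out-degree bound
      intro i
      simp only [hyy]
      rw [hos i, hout i]
      split_ifs <;> norm_num
    · -- capacity
      intro i j hadj
      simp only [hyy]
      have hedgenodup : (L.map (Function.uncurry Sym2.mk : V × V → Sym2 V)).Nodup := by
        rw [← hedges]
        exact (hQpath u v h1 h2).isTrail.edges_nodup
      by_cases hij : (i,j) ∈ L
      · have hE : s(i,j) ∈ E' := hLedge (i,j) hij
        have hji : (j,i) ∉ L := by
          intro hji
          have := List.inj_on_of_nodup_map hedgenodup hij hji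
            (by exact Sym2.eq_swap)
          simp only [Prod.mk.injEq] at this
          exact hadj.ne this.1
        rw [if_pos hij, if_neg hji, if_pos hE]
        norm_num
      · by_cases hji : (j,i) ∈ L
        · have hE : s(i,j) ∈ E' := by
            rw [Sym2.eq_swap]
            exact hLedge (j,i) hji
          rw [if_neg hij, if_pos hji, if_pos hE]
          norm_num
        · rw [if_neg hij, if_neg hji]
          split_ifs <;> norm_num
  · -- cost
    have e1 : ∀ e ∈ G.edgeFinset, w e * (if e ∈ E' then (1:ℝ) else 0)
        = if e ∈ E' then w e else 0 := by
      intro e _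
      split_ifs <;> ring
    rw [Finset.sum_congr rfl e1, ← Finset.sum_filter]
    congr 1
    rw [Finset.filter_mem_eq_inter, Finset.inter_eq_right.mpr hE'fin]

lemma dirA [LinearOrder V]
    (G : SimpleGraph V) [DecidableRel G.Adj] (w : Sym2 V → ℝ)
    (hw : ∀ e ∈ G.edgeSet, 0 < w e) (P : Finset (Sym2 V)) (f : ℝ → ℝ)
    (x : Sym2 V → ℝ) (y : V → V → V → V → ℝ)
    (hx : ∀ e ∈ G.edgeFinset, x e = 0 ∨ x e = 1)
    (hy : ∀ u v i j : V, y u v i j = 0 ∨ y u v i j = 1)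
    (hfeas : ∀ u v : V, u < v → s(u, v) ∈ P →
        ((∑ p ∈ Finset.univ.filter (fun p : V × V => G.Adj p.1 p.2),
            y u v p.1 p.2 * w s(p.1, p.2)) ≤ f (graphDist G w u v)) ∧
        (∀ i : V,
          (∑ j ∈ Finset.univ.filter (fun j => G.Adj i j), y u v i j) -
          (∑ j ∈ Finset.univ.filter (fun j => G.Adj j i), y u v j i) =
            if i = u then 1 else if i = v then -1 else 0) ∧
        (∀ i : V, (∑ j ∈ Finset.univ.filter (fun j => G.Adj i j), y u v i j) ≤ 1) ∧
        (∀ i j : V, G.Adj i j → y u v i j + y u v j i ≤ x s(i, j))) :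
    ∃ E' : Finset (Sym2 V), ↑E' ⊆ G.edgeSet ∧
      (∀ u v : V, u < v → s(u, v) ∈ P →
        ∃ p : G.Walk u v, (∀ e ∈ p.edges, e ∈ E') ∧
          walkWeight w p ≤ f (graphDist G w u v)) ∧
      ∑ e ∈ E', w e = ∑ e ∈ G.edgeFinset, w e * x e := by
  classical
  refine ⟨G.edgeFinset.filter (fun e => x e = 1), ?_, ?_, ?_⟩
  · intro e he
    simp only [Finset.coe_filter, Set.mem_setOf_eq] at he
    exact SimpleGraph.mem_edgeFinset.mp he.1
  · intro u v h1 h2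
    obtain ⟨c1, c2, c3, c4⟩ := hfeas u v h1 h2
    set F : Finset (V × V) :=
      univ.filter (fun p : V × V => G.Adj p.1 p.2 ∧ y u v p.1 p.2 = 1) with hF
    have hFmem : ∀ p : V × V, p ∈ F ↔ G.Adj p.1 p.2 ∧ y u v p.1 p.2 = 1 := by
      intro p; rw [hF, Finset.mem_filter]; simp
    have hco : ∀ i : V, (∑ j ∈ Finset.univ.filter (fun j => G.Adj i j), y u v i j)
        = ((univ.filter fun j => (i,j) ∈ F).card : ℝ) := by
      intro i
      rw [sum_boole_card _ _ (fun j _ => hy u v i j)]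
      congr 2
      rw [Finset.filter_filter]
      apply Finset.filter_congr
      intro j _
      rw [hFmem]
    have hci : ∀ i : V, (∑ j ∈ Finset.univ.filter (fun j => G.Adj j i), y u v j i)
        = ((univ.filter fun j => (j,i) ∈ F).card : ℝ) := by
      intro i
      rw [sum_boole_card _ _ (fun j _ => hy u v j i)]
      congr 2
      rw [Finset.filter_filter]
      apply Finset.filter_congr
      intro j _
      rw [hFmem]
    obtain ⟨p, hnodup, hdF⟩ := flowWalk G F u v (ne_of_lt h1)
      (fun pr hpr => ((hFmem pr).mp hpr).1)
      (by
        intro i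
        have := c3 i
        rw [hco i] at this
        exact_mod_cast this)
      (by
        intro i
        have := c2 i
        rw [hco i, hci i] at this
        split_ifs at this ⊢ <;> exact_mod_cast this)
    have hLsub : ∀ pr : V × V, pr ∈ p.darts.map SimpleGraph.Dart.toProd → pr ∈ F := by
      intro pr hpr
      obtain ⟨d, hd, rfl⟩ := List.mem_map.mp hpr
      exact hdF d hd
    have hedges : p.edges = (p.darts.map SimpleGraph.Dart.toProd).map (Function.uncurry Sym2.mk : V × V → Sym2 V) := by
      rw [List.map_map]
      rfl
    refine ⟨p, ?_, ?_⟩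
    · -- edges in E'
      intro e he
      rw [hedges] at he
      obtain ⟨pr, hpr, rfl⟩ := List.mem_map.mp he
      have hprF := hLsub pr hpr
      rw [hFmem] at hprF
      obtain ⟨hadj, hy1⟩ := hprF
      have hcap := c4 pr.1 pr.2 hadj
      have hyrev : 0 ≤ y u v pr.2 pr.1 := by
        rcases hy u v pr.2 pr.1 with h | h <;> rw [h] <;> norm_num
      have hx1 : 1 ≤ x s(pr.1, pr.2) := by rw [← hy1]; linarith
      have hef : s(pr.1, pr.2) ∈ G.edgeFinset :=
        SimpleGraph.mem_edgeFinset.mpr (G.mem_edgeSet.mpr hadj)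
      have hxe : x s(pr.1, pr.2) = 1 := by
        rcases hx _ hef with h | h
        · rw [h] at hx1; norm_num at hx1
        · exact h
      rw [Finset.mem_filter]
      exact ⟨(by rwa [show Function.uncurry Sym2.mk pr = s(pr.1, pr.2) from rfl]),
        (by rwa [show Function.uncurry Sym2.mk pr = s(pr.1, pr.2) from rfl])⟩
    · -- weight bound
      have hWF : ∀ pr ∈ F, 0 ≤ w s(pr.1, pr.2) := by
        intro pr hpr
        exact (hw _ (G.mem_edgeSet.mpr ((hFmem pr).mp hpr).1)).le
      have h1' : walkWeight w p
          = ((p.darts.map SimpleGraph.Dart.toProd).map (fun pr => w s(pr.1, pr.2))).sum := by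
        rw [walkWeight, hedges]
        simp only [List.map_map]
        rfl
      have h2' : ((p.darts.map SimpleGraph.Dart.toProd).map (fun pr => w s(pr.1, pr.2))).sum
          = ∑ pr ∈ (p.darts.map SimpleGraph.Dart.toProd).toFinset, w s(pr.1, pr.2) :=
        (List.sum_toFinset _ hnodup).symm
      have h3' : ∑ pr ∈ (p.darts.map SimpleGraph.Dart.toProd).toFinset, w s(pr.1, pr.2)
          ≤ ∑ pr ∈ F, w s(pr.1, pr.2) := by
        apply Finset.sum_le_sum_of_subset_of_nonneg
        · intro pr hpr
          exact hLsub pr (List.mem_toFinset.mp hpr)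
        · intro pr hpr _
          exact hWF pr hpr
      have h4' : ∑ pr ∈ F, w s(pr.1, pr.2)
          = ∑ pr ∈ Finset.univ.filter (fun pr : V × V => G.Adj pr.1 pr.2),
              y u v pr.1 pr.2 * w s(pr.1, pr.2) := by
        have e1 : ∀ pr ∈ Finset.univ.filter (fun pr : V × V => G.Adj pr.1 pr.2),
            y u v pr.1 pr.2 * w s(pr.1, pr.2)
            = if y u v pr.1 pr.2 = 1 then w s(pr.1, pr.2) else 0 := by
          intro pr _
          rcases hy u v pr.1 pr.2 with h | h <;> rw [h] <;> norm_num
        rw [Finset.sum_congr rfl e1, ← Finset.sum_filter, Finset.filter_filter]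
      calc walkWeight w p = _ := h1'
        _ = _ := h2'
        _ ≤ _ := h3'
        _ = _ := h4'
        _ ≤ f (graphDist G w u v) := c1
  · -- cost
    rw [← Finset.sum_filter_add_sum_filter_not G.edgeFinset (fun e => x e = 1)
      (fun e => w e * x e)]
    have e1 : ∑ e ∈ G.edgeFinset.filter (fun e => x e = 1), w e * x e
        = ∑ e ∈ G.edgeFinset.filter (fun e => x e = 1), w e := by
      apply Finset.sum_congr rfl
      intro e he
      rw [(Finset.mem_filter.mp he).2, mul_one]
    have e2 : ∑ e ∈ G.edgeFinset.filter (fun e => ¬ x e = 1), w e * x e = 0 := by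
      apply Finset.sum_eq_zero
      intro e he
      rcases hx e (Finset.mem_filter.mp he).1 with h | h
      · rw [h, mul_zero]
      · exact absurd h (Finset.mem_filter.mp he).2
    rw [e1, e2, add_zero]

end Aux

/-- The flow-based ILP for pairwise spanners is exact: the minimum of
`Σ_{e ∈ E} w(e)·x_e` over feasible binary assignments `(x, y)` (edge-selection variables `x_e`
and, for each pair `(u,v) ∈ P` with `u < v`, directed flow variables `y u v i j` on the
bidirected edges, subject to the length bound (1), flow conservation (2), out-degree bound (3),
and capacity coupling (4)) equals the minimum weight `W(E')` over edge sets `E' ⊆ E` with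
`d_{E'}(u,v) ≤ f(d_G(u,v))` for all pairs in `P`. -/
theorem stmt14 {V : Type*} [Fintype V] [DecidableEq V] [LinearOrder V]
    (G : SimpleGraph V) [DecidableRel G.Adj] (w : Sym2 V → ℝ)
    (hG : G.Connected) (hw : ∀ e ∈ G.edgeSet, 0 < w e)
    (P : Finset (Sym2 V)) (hP : ∀ e ∈ P, ¬ e.IsDiag)
    (f : ℝ → ℝ) (hf : IsDistortion f) :
    sInf {c : ℝ | ∃ (x : Sym2 V → ℝ) (y : V → V → V → V → ℝ),
      (∀ e ∈ G.edgeFinset, x e = 0 ∨ x e = 1) ∧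
      (∀ u v i j : V, y u v i j = 0 ∨ y u v i j = 1) ∧
      (∀ u v : V, u < v → s(u, v) ∈ P →
        ((∑ p ∈ Finset.univ.filter (fun p : V × V => G.Adj p.1 p.2),
            y u v p.1 p.2 * w s(p.1, p.2)) ≤ f (graphDist G w u v)) ∧
        (∀ i : V,
          (∑ j ∈ Finset.univ.filter (fun j => G.Adj i j), y u v i j) -
          (∑ j ∈ Finset.univ.filter (fun j => G.Adj j i), y u v j i) =
            if i = u then 1 else if i = v then -1 else 0) ∧
        (∀ i : V, (∑ j ∈ Finset.univ.filter (fun j => G.Adj i j), y u v i j) ≤ 1) ∧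
        (∀ i j : V, G.Adj i j → y u v i j + y u v j i ≤ x s(i, j))) ∧
      (∑ e ∈ G.edgeFinset, w e * x e) = c} =
    sInf {c : ℝ | ∃ E' : Finset (Sym2 V), ↑E' ⊆ G.edgeSet ∧
      (∀ u v : V, u < v → s(u, v) ∈ P →
        ∃ p : G.Walk u v, (∀ e ∈ p.edges, e ∈ E') ∧
          walkWeight w p ≤ f (graphDist G w u v)) ∧
      setWeight w E' = c} := by
  have hset : {c : ℝ | ∃ (x : Sym2 V → ℝ) (y : V → V → V → V → ℝ),
      (∀ e ∈ G.edgeFinset, x e = 0 ∨ x e = 1) ∧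
      (∀ u v i j : V, y u v i j = 0 ∨ y u v i j = 1) ∧
      (∀ u v : V, u < v → s(u, v) ∈ P →
        ((∑ p ∈ Finset.univ.filter (fun p : V × V => G.Adj p.1 p.2),
            y u v p.1 p.2 * w s(p.1, p.2)) ≤ f (graphDist G w u v)) ∧
        (∀ i : V,
          (∑ j ∈ Finset.univ.filter (fun j => G.Adj i j), y u v i j) -
          (∑ j ∈ Finset.univ.filter (fun j => G.Adj j i), y u v j i) =
            if i = u then 1 else if i = v then -1 else 0) ∧
        (∀ i : V, (∑ j ∈ Finset.univ.filter (fun j => G.Adj i j), y u v i j) ≤ 1) ∧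
        (∀ i j : V, G.Adj i j → y u v i j + y u v j i ≤ x s(i, j))) ∧
      (∑ e ∈ G.edgeFinset, w e * x e) = c} =
      {c : ℝ | ∃ E' : Finset (Sym2 V), ↑E' ⊆ G.edgeSet ∧
      (∀ u v : V, u < v → s(u, v) ∈ P →
        ∃ p : G.Walk u v, (∀ e ∈ p.edges, e ∈ E') ∧
          walkWeight w p ≤ f (graphDist G w u v)) ∧
      setWeight w E' = c} := by
    ext c
    simp only [Set.mem_setOf_eq]
    constructor
    · rintro ⟨x, y, hx, hy, hfeas, hcost⟩
      obtain ⟨E', h1, h2, h3⟩ := dirA G w hw P f x y hx hy hfeas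
      exact ⟨E', h1, h2, by rw [setWeight, h3, hcost]⟩
    · rintro ⟨E', hE', hwalks, hcost⟩
      obtain ⟨x, y, h1, h2, h3, h4⟩ := dirB G w hw P f E' hE' hwalks
      exact ⟨x, y, h1, h2, h3, by rw [h4, ← hcost, setWeight]⟩
  rw [hset]
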